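/- Every comparability graph (a graph admitting a transitive acyclic orientation) is permutationally representable, i.e., it can be represented by a word that is a concatenation of permutations of the entire vertex set. -/

import Mathlib

/-- Two letters `x` and `y` alternate in the word `w` if, after deleting all
letters other than `x` and `y`, consecutive letters always differ
(i.e. the restriction has the form `xyxy⋯` or `yxyx⋯`). -/
def Alternates {V : Type*} [DecidableEq V] (w : List V) (x y : V) : Prop :=
  (w.filter (fun z => z = x || z = y)).Chain' (· ≠ ·)

/-- A word `w` represents the graph `G`: every vertex occurs in `w`, and two
distinct letters alternate in `w` iff they are adjacent in `G`. -/
def Represents {V : Type*} [DecidableEq V] (w : List V) (G : SimpleGraph V) : Prop :=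
  (∀ v, v ∈ w) ∧ ∀ x y : V, x ≠ y → (Alternates w x y ↔ G.Adj x y)

/-- A graph is word-representable if some word represents it. -/
def WordRepresentable {V : Type*} [DecidableEq V] (G : SimpleGraph V) : Prop :=
  ∃ w : List V, Represents w G

section Aux
variable {V : Type*} [DecidableEq V]

lemma filter_join' (p : V → Bool) : ∀ L : List (List V),
    L.flatten.filter p = (L.map (List.filter p)).flatten
  | [] => rfl
  | b :: L => by simp [List.filter_append, filter_join' p L]

lemma chain_join_blocks {x y : V} (hxy : x ≠ y) :
    ∀ L : List (List V), (∀ b ∈ L, b = [x, y] ∨ b = [y, x]) →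
    (L.flatten.Chain' (· ≠ ·) ↔ L.Chain' (· = ·))
  | [], _ => by simp [List.Chain']
  | b :: [], hb => by
    rcases hb b (by simp) with rfl | rfl <;> simp [List.Chain', hxy, hxy.symm]
  | b :: c :: L, hb => by
    have hc : ∀ b' ∈ c :: L, b' = [x, y] ∨ b' = [y, x] := fun b' h => hb b' (by simp [h])
    have ih := chain_join_blocks hxy (c :: L) hc
    rcases hb b (by simp) with rfl | rfl <;> rcases hb c (by simp) with rfl | rfl <;>
      simp only [List.Chain', List.flatten_cons, List.cons_append, List.nil_append] at ih ⊢ <;>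
      simp [List.isChain_cons_cons, hxy, hxy.symm, ih]

lemma two_block {f : List V} {x y : V} (hf : f.Nodup) (hx : x ∈ f) (hy : y ∈ f)
    (hxy : x ≠ y) (hall : ∀ z ∈ f, z = x ∨ z = y) : f = [x, y] ∨ f = [y, x] := by
  have hsub : f ⊆ [x, y] := by intro z hz; rcases hall z hz with rfl | rfl <;> simp
  have hlen : f.length ≤ 2 := by simpa using (hf.subperm hsub).length_le
  have hsub2 : [x, y] ⊆ f := by intro z hz; simp at hz; rcases hz with rfl | rfl <;> assumption
  have hlen2 : 2 ≤ f.length := by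
    simpa using ((List.nodup_cons.2 ⟨by simp [hxy], by simp⟩ :
      ([x, y] : List V).Nodup).subperm hsub2).length_le
  obtain ⟨a, b, rfl⟩ := List.length_eq_two.1 (le_antisymm hlen hlen2)
  have hab : a ≠ b := by simp [List.nodup_cons] at hf; tauto
  rcases hall a (by simp) with rfl | rfl
  · rcases hall b (by simp) with rfl | rfl
    · exact absurd rfl hab
    · exact Or.inl rfl
  · rcases hall b (by simp) with rfl | rfl
    · exact Or.inr rfl
    · exact absurd rfl hab

end Aux

theorem comparability_permutationally_representable {V : Type*} [Fintype V] [DecidableEq V]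
    (G : SimpleGraph V) (r : V → V → Prop)
    (htrans : Transitive r) (hirr : Irreflexive r)
    (horient : ∀ x y : V, G.Adj x y ↔ (r x y ∨ r y x)) :
    ∃ ps : List (List V),
      (∀ p ∈ ps, p.Nodup ∧ ∀ v : V, v ∈ p) ∧ Represents ps.flatten G := by
  classical
  -- the augmented strict order for a pair q
  set r' : V × V → V → V → Prop := fun q x y =>
    r x y ∨ (q.1 ≠ q.2 ∧ ¬r q.1 q.2 ∧ ¬r q.2 q.1 ∧ (x = q.1 ∨ r x q.1) ∧ (y = q.2 ∨ r q.2 y))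
    with hr'
  have hside : ∀ q : V × V, ∀ x, (q.1 ≠ q.2 ∧ ¬r q.1 q.2 ∧ ¬r q.2 q.1) →
      ¬((x = q.1 ∨ r x q.1) ∧ (x = q.2 ∨ r q.2 x)) := by
    rintro ⟨a, b⟩ x ⟨hab, h1, h2⟩ ⟨ha | ha, hb | hb⟩
    · subst ha; subst hb; exact hab rfl
    · subst ha; exact h2 hb
    · subst hb; exact h2 ha
    · exact h2 (htrans hb ha)
  have hirr' : ∀ q, Irreflexive (r' q) := by
    rintro q x (h | ⟨hab, h1, h2, hx1, hx2⟩)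
    · exact hirr x h
    · exact hside q x ⟨hab, h1, h2⟩ ⟨hx1, hx2⟩
  have htrans' : ∀ q, Transitive (r' q) := by
    rintro ⟨a, b⟩ x y z (hxy | ⟨hab, h1, h2, hx, hy⟩) (hyz | ⟨hab', h1', h2', hy', hz'⟩)
    · exact Or.inl (htrans hxy hyz)
    · refine Or.inr ⟨hab', h1', h2', ?_, hz'⟩
      rcases hy' with rfl | hy'
      · exact Or.inr hxy
      · exact Or.inr (htrans hxy hy')
    · refine Or.inr ⟨hab, h1, h2, hx, ?_⟩
      rcases hy with rfl | hy
      · exact Or.inr hyz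
      · exact Or.inr (htrans hy hyz)
    · exact Or.inr ⟨hab, h1, h2, hx, hz'⟩
  -- partial order and its linear extension
  set le' : V × V → V → V → Prop := fun q x y => x = y ∨ r' q x y with hle'
  have hpo : ∀ q, IsPartialOrder V (le' q) := by
    intro q
    refine { refl := fun x => Or.inl rfl, trans := ?_, antisymm := ?_ }
    · rintro x y z (rfl | h) (rfl | h')
      · exact Or.inl rfl
      · exact Or.inr h'
      · exact Or.inr h
      · exact Or.inr (htrans' q h h')
    · rintro x y (rfl | h) (h' | h')
      · rfl
      · rfl
      · exact h'.symm
      · exact absurd (htrans' q h h') (hirr' q x)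
  have hlin : ∀ q : V × V, ∃ s : V → V → Prop, IsLinearOrder V s ∧ le' q ≤ s := by
    intro q
    haveI := hpo q
    exact extend_partialOrder (le' q)
  choose s hs hle using hlin
  -- the permutations
  set perm : V × V → List V := fun q => (Finset.univ.toList (α := V)).insertionSort (s q) with hperm
  have hpermP : ∀ q, List.Perm (perm q) Finset.univ.toList := fun q => List.perm_insertionSort _ _
  have hpermnd : ∀ q, (perm q).Nodup := fun q => ((hpermP q).nodup_iff).2 (Finset.nodup_toList _)
  have hpermmem : ∀ q v, v ∈ perm q := fun q v => ((hpermP q).mem_iff).2 (Finset.mem_toList.2 (Finset.mem_univ v))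
  have hsorted : ∀ q, (perm q).Pairwise (s q) := by
    intro q
    haveI : IsLinearOrder V (s q) := hs q
    haveI : IsTotal V (s q) := (hs q).toTotal
    haveI : IsTrans V (s q) := (hs q).toIsTrans
    exact List.pairwise_insertionSort _ _
  set ps : List (List V) := (Finset.univ.toList (α := V × V)).map perm with hps
  refine ⟨ps, fun p hp => ?_, ?_, ?_⟩
  · obtain ⟨q, _, rfl⟩ := List.mem_map.1 hp
    exact ⟨hpermnd q, hpermmem q⟩
  · intro v
    rw [List.mem_flatten]
    exact ⟨perm (v, v), List.mem_map_of_mem (Finset.mem_toList.2 (Finset.mem_univ _)), hpermmem _ v⟩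
  · intro x y hxy
    -- blocks analysis
    have hblocks : ∀ q : V × V, (perm q).filter (fun z => z = x || z = y) = [x, y] ∨
        (perm q).filter (fun z => z = x || z = y) = [y, x] := by
      intro q
      apply two_block (List.Nodup.filter _ (hpermnd q))
      · exact List.mem_filter.2 ⟨hpermmem q x, by simp⟩
      · exact List.mem_filter.2 ⟨hpermmem q y, by simp⟩
      · exact hxy
      · intro z hz
        have := (List.mem_filter.1 hz).2
        simpa using this
    have hblock_of_s : ∀ q : V × V, s q x y →
        (perm q).filter (fun z => z = x || z = y) = [x, y] := by
      intro q hsxy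
      rcases hblocks q with h | h
      · exact h
      · exfalso
        have hsub : List.Sublist [y, x] (perm q) := h ▸ List.filter_sublist
        have : s q y x := (List.pairwise_cons.1 (hsorted q |>.sublist hsub)).1 x (by simp)
        exact hxy ((hs q).toIsPartialOrder.toAntisymm.antisymm x y hsxy this)
    have hjoin : ps.flatten.filter (fun z => z = x || z = y) =
        (ps.map (List.filter (fun z => z = x || z = y))).flatten := filter_join' _ ps
    have hblocksmem : ∀ b ∈ ps.map (List.filter (fun z => z = x || z = y)),
        b = [x, y] ∨ b = [y, x] := by
      intro b hb
      rw [List.map_map] at hb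
      obtain ⟨q, _, rfl⟩ := List.mem_map.1 hb
      exact hblocks q
    have key := chain_join_blocks hxy _ hblocksmem
    constructor
    · -- Alternates → Adj
      intro halt
      by_contra hadj
      rw [horient] at hadj
      obtain ⟨h1, h2⟩ := not_or.1 hadj
      unfold Alternates at halt
      rw [hjoin] at halt
      have hchain := key.1 halt
      haveI : IsTrans V (· = · : V → V → Prop) := ⟨fun _ _ _ h h' => h.trans h'⟩
      have hpw := List.isChain_iff_pairwise.1 hchain
      -- block for (x,y) is [x,y], block for (y,x) is [y,x]
      have hb1 : (perm (x, y)).filter (fun z => z = x || z = y) = [x, y] := by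
        apply hblock_of_s
        apply hle (x, y)
        exact Or.inr (Or.inr ⟨hxy, h1, h2, Or.inl rfl, Or.inl rfl⟩)
      have hb2 : (perm (y, x)).filter (fun z => z = x || z = y) = [y, x] := by
        rcases hblocks (y, x) with h | h
        · exfalso
          have hsub : List.Sublist [x, y] (perm (y, x)) := h ▸ List.filter_sublist
          have hsyx : s (y, x) y x :=
            hle (y, x) _ _ (Or.inr (Or.inr ⟨hxy.symm, h2, h1, Or.inl rfl, Or.inl rfl⟩))
          have hsxy : s (y, x) x y :=
            (List.pairwise_cons.1 ((hsorted (y, x)).sublist hsub)).1 y (by simp)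
          exact hxy ((hs _).toIsPartialOrder.toAntisymm.antisymm x y hsxy hsyx)
        · exact h
      -- both blocks are members of the mapped list; pairwise Eq forces them equal
      have hmem1 : [x, y] ∈ ps.map (List.filter (fun z => z = x || z = y)) := by
        rw [List.map_map]
        exact hb1 ▸ List.mem_map_of_mem (Finset.mem_toList.2 (Finset.mem_univ (x, y)))
      have hmem2 : [y, x] ∈ ps.map (List.filter (fun z => z = x || z = y)) := by
        rw [List.map_map]
        exact hb2 ▸ List.mem_map_of_mem (Finset.mem_toList.2 (Finset.mem_univ (y, x)))
      -- all elements of a Pairwise-Eq list are equal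
      have hallEq : ∀ a ∈ ps.map (List.filter (fun z => z = x || z = y)),
          ∀ b ∈ ps.map (List.filter (fun z => z = x || z = y)), a = b := by
        cases hL : ps.map (List.filter (fun z => z = x || z = y)) with
        | nil => intro a ha; simp [hL] at ha
        | cons c t =>
          rw [hL] at hpw
          have hc := List.pairwise_cons.1 hpw
          intro a ha b hb
          have haeq : a = c := by
            rcases List.mem_cons.1 ha with rfl | h
            · rfl
            · exact (hc.1 a h).symm
          have hbeq : b = c := by
            rcases List.mem_cons.1 hb with rfl | h
            · rfl
            · exact (hc.1 b h).symm
          rw [haeq, hbeq]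
      have : ([x, y] : List V) = [y, x] := hallEq _ hmem1 _ hmem2
      simp at this
      exact hxy this.1
    · -- Adj → Alternates
      intro hadj
      unfold Alternates
      rw [hjoin]
      rw [key]
      rw [horient] at hadj
      haveI : IsTrans V (· = · : V → V → Prop) := ⟨fun _ _ _ h h' => h.trans h'⟩
      simp only [List.Chain']
      rw [List.isChain_iff_pairwise]
      rcases hadj with hxy' | hyx'
      · have hall : ∀ b ∈ ps.map (List.filter (fun z => z = x || z = y)), b = [x, y] := by
          intro b hb
          rw [List.map_map] at hb
          obtain ⟨q, _, rfl⟩ := List.mem_map.1 hb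
          exact hblock_of_s q (hle q _ _ (Or.inr (Or.inl hxy')))
        exact List.pairwise_of_forall_mem_list fun a ha b hb => (hall a ha).trans (hall b hb).symm
      · have hall : ∀ b ∈ ps.map (List.filter (fun z => z = x || z = y)), b = [y, x] := by
          intro b hb
          rw [List.map_map] at hb
          obtain ⟨q, _, rfl⟩ := List.mem_map.1 hb
          rcases hblocks q with h | h
          · exfalso
            have hsub : List.Sublist [x, y] (perm q) := h ▸ List.filter_sublist
            have hsxy : s q x y := (List.pairwise_cons.1 ((hsorted q).sublist hsub)).1 y (by simp)
            have hsyx : s q y x := hle q _ _ (Or.inr (Or.inl hyx'))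
            exact hxy ((hs q).toIsPartialOrder.toAntisymm.antisymm x y hsxy hsyx)
          · exact h
        exact List.pairwise_of_forall_mem_list fun a ha b hb => (hall a ha).trans (hall b hb).symm
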